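/- arXiv:2112.13799 — 2 statements merged into one kernel-verified Lean document; each statement's English description precedes it below -/
import Mathlib

section
/- Let 1 < p < ∞ with conjugate exponent p', let c = (c_n)_{n∈ℤ} be a bounded sequence of complex numbers that is not identically zero, and suppose E ∈ L^p is a partial majorant of c. Then every trigonometric polynomial g in the class R(c) satisfies ‖g‖_{p'} ≥ 1/‖E‖_p; consequently K_p(c) ≥ 1/‖E‖_p > 0. -/
open MeasureTheory Complex
open scoped Real ENNReal

noncomputable section

instance : Fact (0 < 2 * Real.pi) := ⟨by positivity⟩

abbrev Circle2Pi := AddCircle (2 * Real.pi)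

abbrev circleMeasure : Measure Circle2Pi := AddCircle.haarAddCircle

lemma norm_fourier' (n : ℤ) (x : Circle2Pi) : ‖fourier n x‖ = 1 := by
  simp [fourier_apply, Circle.norm_coe]

lemma integral_fourier' (k : ℤ) :
    ∫ t : Circle2Pi, fourier k t ∂circleMeasure = if k = 0 then 1 else 0 := by
  split_ifs with h
  · subst h
    have h2 : (fun t : Circle2Pi => fourier 0 t) = fun _ => (1:ℂ) := funext fun x => fourier_zero
    rw [h2, integral_const]; simp
  · exact integral_eq_zero_of_add_right_eq_neg
      (fourier_add_half_inv_index h (by positivity))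

lemma integrable_fourier' (n : ℤ) :
    Integrable (fun x : Circle2Pi => fourier n x) circleMeasure :=
  memLp_one_iff_integrable.mp <| MemLp.of_bound
    ((fourier n).continuous.aestronglyMeasurable) 1
    (Filter.Eventually.of_forall fun x => (norm_fourier' n x).le)

lemma fourierCoeff_trigPoly (s : Finset ℤ) (a : ℤ → ℂ) (m : ℤ) :
    fourierCoeff (fun x : Circle2Pi => ∑ n ∈ s, a n * fourier n x) m
      = if m ∈ s then a m else 0 := by
  unfold fourierCoeff
  have h1 : ∀ t : Circle2Pi, fourier (-m) t • ∑ n ∈ s, a n * fourier n t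
      = ∑ n ∈ s, a n * fourier (-m + n) t := by
    intro t
    rw [smul_eq_mul, Finset.mul_sum]
    refine Finset.sum_congr rfl fun n _ => ?_
    rw [fourier_add]; ring
  simp_rw [h1]
  rw [integral_finset_sum]
  · simp_rw [integral_const_mul, integral_fourier']
    have h2 : ∀ n : ℤ, (if (-m + n : ℤ) = 0 then (1:ℂ) else 0) = if n = m then 1 else 0 := by
      intro n; by_cases h : n = m <;> simp [h] <;> omega
    simp_rw [h2, mul_ite, mul_one, mul_zero, Finset.sum_ite_eq' s m a]
  · intro n _
    exact (integrable_fourier' (-m + n)).const_mul _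

lemma integral_conj_trigPoly_mul (s : Finset ℤ) (a : ℤ → ℂ) (E : Circle2Pi → ℂ)
    (hE : Integrable E circleMeasure) :
    ∫ x, (starRingEnd ℂ) (∑ n ∈ s, a n * fourier n x) * E x ∂circleMeasure
      = ∑ n ∈ s, (starRingEnd ℂ) (a n) * fourierCoeff E n := by
  have h1 : ∀ x : Circle2Pi, (starRingEnd ℂ) (∑ n ∈ s, a n * fourier n x) * E x
      = ∑ n ∈ s, (starRingEnd ℂ) (a n) * (fourier (-n) x * E x) := by
    intro x
    rw [map_sum, Finset.sum_mul]
    refine Finset.sum_congr rfl fun n _ => ?_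
    rw [map_mul, ← fourier_neg]; ring
  simp_rw [h1]
  rw [integral_finset_sum]
  · refine Finset.sum_congr rfl fun n _ => ?_
    rw [integral_const_mul]
    rfl
  · intro n _
    exact (hE.bdd_mul ((fourier (-n)).continuous.aestronglyMeasurable)
      (Filter.Eventually.of_forall fun x => (norm_fourier' _ x).le)).const_mul _

theorem Kconst_lower_bound' (p q : ℝ≥0∞) (hp1 : 1 < p) (hp2 : p < ∞)
    (hpq : 1 / p + 1 / q = 1)
    (c : ℤ → ℂ)
    (E : Circle2Pi → ℂ) (hE : MemLp E p circleMeasure)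
    (hEpm : ∀ n : ℤ, c n ≠ 0 → (fourierCoeff E n).im = 0 ∧ ‖c n‖ ≤ (fourierCoeff E n).re)
    (g : Circle2Pi → ℂ)
    (htrig : ∃ (s : Finset ℤ) (a : ℤ → ℂ), ∀ x, g x = ∑ n ∈ s, a n * fourier n x)
    (hre : ∀ n : ℤ, (fourierCoeff g n).im = 0 ∧ 0 ≤ (fourierCoeff g n).re)
    (hvan : ∀ n : ℤ, c n = 0 → fourierCoeff g n = 0)
    (hsum : ∑' n : ℤ, ‖c n‖ * (fourierCoeff g n).re = 1) :
    1 / eLpNorm E p circleMeasure ≤ eLpNorm g q circleMeasure := by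
  obtain ⟨s, a, hg⟩ := htrig
  have hgfun : g = fun x => ∑ n ∈ s, a n * fourier n x := funext hg
  have hb : ∀ m, fourierCoeff g m = if m ∈ s then a m else 0 := by
    intro m; rw [hgfun]; exact fourierCoeff_trigPoly s a m
  have hEint : Integrable E circleMeasure := hE.integrable hp1.le
  set I : ℂ := ∫ x, (starRingEnd ℂ) (g x) * E x ∂circleMeasure with hI
  have hIsum : I = ∑ n ∈ s, (starRingEnd ℂ) (a n) * fourierCoeff E n := by
    rw [hI, hgfun]
    exact integral_conj_trigPoly_mul s a E hEint
  -- 1 ≤ Re I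
  have hone : (1:ℝ) ≤ I.re := by
    have h1 : ∑' n : ℤ, ‖c n‖ * (fourierCoeff g n).re
        = ∑ n ∈ s, ‖c n‖ * (a n).re := by
      rw [tsum_eq_sum (s := s) (fun n hn => by rw [hb n, if_neg hn]; simp)]
      exact Finset.sum_congr rfl fun n hn => by rw [hb n, if_pos hn]
    rw [← hsum, h1, hIsum, Complex.re_sum]
    apply Finset.sum_le_sum
    intro n hn
    have han : a n = fourierCoeff g n := by rw [hb n, if_pos hn]
    have him : (a n).im = 0 := by rw [han]; exact (hre n).1
    have hnn : 0 ≤ (a n).re := by rw [han]; exact (hre n).2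
    have hterm : ((starRingEnd ℂ) (a n) * fourierCoeff E n).re
        = (a n).re * (fourierCoeff E n).re := by
      simp [Complex.mul_re, him]
    rw [hterm]
    by_cases hcn : c n = 0
    · have h0 : fourierCoeff g n = 0 := hvan n hcn
      rw [han, h0, hcn]; simp
    · calc ‖c n‖ * (a n).re ≤ (fourierCoeff E n).re * (a n).re :=
            mul_le_mul_of_nonneg_right (hEpm n hcn).2 hnn
      _ = (a n).re * (fourierCoeff E n).re := mul_comm _ _
  -- g is bounded and continuous
  have hgcont : Continuous g := by
    rw [hgfun]
    exact continuous_finset_sum _ fun n _ => continuous_const.mul (fourier n).continuous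
  have hgbd : ∀ x, ‖g x‖ ≤ ∑ n ∈ s, ‖a n‖ := by
    intro x
    rw [hg x]
    calc ‖∑ n ∈ s, a n * fourier n x‖ ≤ ∑ n ∈ s, ‖a n * fourier n x‖ := norm_sum_le _ _
    _ = ∑ n ∈ s, ‖a n‖ := by
        refine Finset.sum_congr rfl fun n _ => ?_
        rw [norm_mul, norm_fourier' n x, mul_one]
  have hgmem : MemLp g q circleMeasure :=
    MemLp.of_bound hgcont.aestronglyMeasurable _ (Filter.Eventually.of_forall hgbd)
  have hconjmeas : AEStronglyMeasurable (fun x => (starRingEnd ℂ) (g x)) circleMeasure :=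
    (Complex.continuous_conj.comp hgcont).aestronglyMeasurable
  -- Hölder
  have hpqr : (1:ℝ≥0∞)/1 = 1/q + 1/p := by
    rw [div_one, add_comm]; exact hpq.symm
  have hholder : eLpNorm (fun x => (starRingEnd ℂ) (g x) * E x) 1 circleMeasure
      ≤ eLpNorm g q circleMeasure * eLpNorm E p circleMeasure := by
    have h3 := eLpNorm_smul_le_mul_eLpNorm (f := E) (μ := circleMeasure) hE.1
      (φ := fun x => (starRingEnd ℂ) (g x)) hconjmeas
      (p := q) (q := p) (r := 1) (hpqr := ⟨by simpa [one_div] using hpqr.symm⟩)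
    have hc : eLpNorm (fun x => (starRingEnd ℂ) (g x)) q circleMeasure
        = eLpNorm g q circleMeasure :=
      eLpNorm_congr_norm_ae (Filter.Eventually.of_forall fun x => RCLike.norm_conj _)
    rwa [hc] at h3
  -- 1 ≤ eLpNorm of the product
  have hint : Integrable (fun x => (starRingEnd ℂ) (g x) * E x) circleMeasure :=
    hEint.bdd_mul hconjmeas (Filter.Eventually.of_forall
      fun x => by rw [RCLike.norm_conj]; exact hgbd x)
  have h2 : (1:ℝ) ≤ ∫ x, ‖(starRingEnd ℂ) (g x) * E x‖ ∂circleMeasure := by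
    refine hone.trans ((Complex.re_le_norm I).trans ?_)
    exact norm_integral_le_integral_norm _
  have h1le : (1:ℝ≥0∞) ≤ eLpNorm (fun x => (starRingEnd ℂ) (g x) * E x) 1 circleMeasure := by
    calc (1:ℝ≥0∞) = ENNReal.ofReal 1 := ENNReal.ofReal_one.symm
    _ ≤ ENNReal.ofReal (∫ x, ‖(starRingEnd ℂ) (g x) * E x‖ ∂circleMeasure) :=
        ENNReal.ofReal_le_ofReal h2
    _ = ∫⁻ x, ‖(starRingEnd ℂ) (g x) * E x‖ₑ ∂circleMeasure :=
        ofReal_integral_norm_eq_lintegral_enorm hint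
    _ = eLpNorm (fun x => (starRingEnd ℂ) (g x) * E x) 1 circleMeasure :=
        eLpNorm_one_eq_lintegral_enorm.symm
  rw [ENNReal.div_le_iff_le_mul (Or.inr hgmem.eLpNorm_ne_top) (Or.inl hE.eLpNorm_ne_top)]
  exact h1le.trans hholder

/-- `F` is a partial majorant of the sequence `c`: at every `n` with `c n ≠ 0`, the
Fourier coefficient `F̂(n)` is real and at least `|c n|`. -/
def IsPartialMajorant (c : ℤ → ℂ) (F : Circle2Pi → ℂ) : Prop :=
  ∀ n : ℤ, c n ≠ 0 → (fourierCoeff F n).im = 0 ∧ ‖c n‖ ≤ (fourierCoeff F n).re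

/-- A trigonometric polynomial: a finite linear combination of the exponentials `e^{inθ}`. -/
def IsTrigPoly (g : Circle2Pi → ℂ) : Prop :=
  ∃ (s : Finset ℤ) (a : ℤ → ℂ), ∀ x, g x = ∑ n ∈ s, a n * fourier n x

/-- The class `R(c)`: trigonometric polynomials with nonnegative real Fourier coefficients
vanishing off the support of `c`, normalized by `∑ₙ |cₙ| ĝ(n) = 1`. -/
def RClass (c : ℤ → ℂ) : Set (Circle2Pi → ℂ) :=
  {g | IsTrigPoly g ∧
    (∀ n : ℤ, (fourierCoeff g n).im = 0 ∧ 0 ≤ (fourierCoeff g n).re) ∧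
    (∀ n : ℤ, c n = 0 → fourierCoeff g n = 0) ∧
    ∑' n : ℤ, ‖c n‖ * (fourierCoeff g n).re = 1}

/-- `K_p(c)`, expressed in terms of the conjugate exponent `q = p'`:
the infimum of `‖g‖_q` over `g ∈ R(c)`. -/
def Kconst (c : ℤ → ℂ) (q : ℝ≥0∞) : ℝ≥0∞ :=
  ⨅ g ∈ RClass c, eLpNorm g q circleMeasure

/-- if `E ∈ L^p` is a partial majorant of a nontrivial bounded sequence `c`,
then every `g ∈ R(c)` satisfies `‖g‖_{p'} ≥ 1/‖E‖_p`, so `K_p(c) ≥ 1/‖E‖_p > 0`. -/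
theorem Kconst_lower_bound (p q : ℝ≥0∞) (hp1 : 1 < p) (hp2 : p < ∞)
    (hpq : 1 / p + 1 / q = 1)
    (c : ℤ → ℂ) (hbdd : ∃ M : ℝ, ∀ n : ℤ, ‖c n‖ ≤ M)
    (hc0 : ∃ n : ℤ, c n ≠ 0)
    (E : Circle2Pi → ℂ) (hE : MemLp E p circleMeasure)
    (hEpm : IsPartialMajorant c E) :
    (∀ g ∈ RClass c, 1 / eLpNorm E p circleMeasure ≤ eLpNorm g q circleMeasure) ∧
    1 / eLpNorm E p circleMeasure ≤ Kconst c q ∧ 0 < Kconst c q := by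
  have key : ∀ g ∈ RClass c, 1 / eLpNorm E p circleMeasure ≤ eLpNorm g q circleMeasure := by
    rintro g ⟨htrig, hre, hvan, hsum⟩
    exact Kconst_lower_bound' p q hp1 hp2 hpq c E hE hEpm g htrig hre hvan hsum
  have hK : 1 / eLpNorm E p circleMeasure ≤ Kconst c q := le_iInf₂ key
  exact ⟨key, hK, lt_of_lt_of_le (ENNReal.div_pos one_ne_zero hE.eLpNorm_ne_top) hK⟩
end
end

section
/- Let j be an integer with j > 1, let G be a nonzero function in L^{2j} with Ĝ(n) real and Ĝ(n) ≥ 0 for all n ∈ ℤ, and let F = (conj G)^{j-1} G^j. Then for every n ∈ ℤ the coefficient F̂(n) is real and nonnegative, the 0-th Fourier coefficient a of |G|^{2j-2} is a strictly positive real number, and F̂(n) ≥ a·Ĝ(n) for all n; in particular, Ĝ(n) > 0 implies F̂(n) > 0, so the support of Ĝ is contained in the support of F̂. -/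
open MeasureTheory Complex
open scoped Real ENNReal

noncomputable section

lemma fourierCoeff_congr_ae' {f g : Circle2Pi → ℂ} (h : f =ᵐ[circleMeasure] g) (n : ℤ) :
    fourierCoeff f n = fourierCoeff g n := by
  unfold fourierCoeff
  exact integral_congr_ae (h.mono fun x hx => by simp [hx])

lemma fourierCoeff_conj' (f : Circle2Pi → ℂ) (m : ℤ) :
    fourierCoeff (fun θ => starRingEnd ℂ (f θ)) m = starRingEnd ℂ (fourierCoeff f (-m)) := by
  unfold fourierCoeff
  rw [← integral_conj]
  refine integral_congr_ae (Filter.Eventually.of_forall fun θ => ?_)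
  simp only [smul_eq_mul, map_mul, Complex.conj_conj, ← fourier_neg, neg_neg]

-- memLp powers
lemma memLp_pow_two {j : ℕ} (hj1 : 1 ≤ j) {G : Circle2Pi → ℂ}
    (hG : MemLp G (2 * j : ℝ≥0∞) circleMeasure) {k : ℕ} (hk1 : 1 ≤ k) (hkj : k ≤ j) :
    MemLp (fun θ => G θ ^ k) 2 circleMeasure := by
  have hN0 : (2 * j : ℝ≥0∞) ≠ 0 := by
    simp only [ne_eq, mul_eq_zero, OfNat.ofNat_ne_zero, Nat.cast_eq_zero, false_or]
    omega
  have hNtop : (2 * j : ℝ≥0∞) ≠ ∞ := by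
    simp [ENNReal.mul_eq_top]
  have key : ∀ k : ℕ, 1 ≤ k → MemLp (fun θ => G θ ^ k) ((2 * j : ℝ≥0∞) / k) circleMeasure := by
    intro k hk
    induction k with
    | zero => omega
    | succ k ih =>
      rcases Nat.eq_or_lt_of_le hk with h1 | h2
      · simp only [← h1, Nat.cast_one, pow_one]
        simpa using hG
      · have hk' : 1 ≤ k := by omega
        have hkk := ih hk'
        have hpqr : 1 / ((2 * j : ℝ≥0∞) / (k + 1 : ℕ)) =
            1 / (2 * j : ℝ≥0∞) + 1 / ((2 * j : ℝ≥0∞) / k) := by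
          rw [one_div, one_div, one_div, ENNReal.inv_div (Or.inr hNtop) (Or.inr hN0),
            ENNReal.inv_div (Or.inr hNtop) (Or.inr hN0), ← one_div, ENNReal.div_add_div_same]
          congr 1
          push_cast; ring
        have hh := MemLp.smul (φ := G) (f := fun θ => G θ ^ k) (r := (2 * j : ℝ≥0∞) / (k + 1 : ℕ)) hkk hG
            (hpqr := ⟨by simp only [one_div] at hpqr; exact hpqr.symm⟩)
        refine hh.ae_eq (Filter.Eventually.of_forall fun θ => ?_)
        simp [Pi.smul_apply, smul_eq_mul, pow_succ]
        ring
  refine MemLp.mono_exponent (key k hk1) ?_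
  have hk0 : (k:ℝ≥0∞) ≠ 0 := by exact_mod_cast (by omega : k ≠ 0)
  rw [ENNReal.le_div_iff_mul_le (Or.inl hk0) (Or.inl (ENNReal.natCast_ne_top k))]
  have : (k:ℝ≥0∞) ≤ (j:ℝ≥0∞) := by exact_mod_cast hkj
  gcongr

lemma memLp_star {f : Circle2Pi → ℂ} (hf : MemLp f 2 circleMeasure) :
    MemLp (fun θ => starRingEnd ℂ (f θ)) 2 circleMeasure := by
  refine MemLp.of_le hf (Complex.continuous_conj.comp_aestronglyMeasurable hf.1) ?_
  exact Filter.Eventually.of_forall fun x => by simp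

lemma fourierCoeff_mul_hasSum {f g : Circle2Pi → ℂ}
    (hf : MemLp f 2 circleMeasure) (hg : MemLp g 2 circleMeasure) (n : ℤ) :
    HasSum (fun m => fourierCoeff f (n - m) * fourierCoeff g m)
      (fourierCoeff (fun θ => f θ * g θ) n) := by
  have hu : MemLp (fun θ => (fourier n θ : ℂ) * starRingEnd ℂ (f θ)) 2 circleMeasure := by
    refine MemLp.of_le hf ((map_continuous (fourier n)).aestronglyMeasurable.mul (memLp_star hf).1) ?_
    refine Filter.Eventually.of_forall fun x => ?_
    simp [norm_mul, Circle.norm_coe]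
  have hinner : (inner ℂ (hu.toLp _) (hg.toLp g) : ℂ)
      = fourierCoeff (fun θ => f θ * g θ) n := by
    rw [MeasureTheory.L2.inner_def]
    unfold fourierCoeff
    refine integral_congr_ae ?_
    filter_upwards [hu.coeFn_toLp, hg.coeFn_toLp] with θ h1 h2
    rw [RCLike.inner_apply, h1, h2]
    simp only [map_mul, Complex.conj_conj, ← fourier_neg, smul_eq_mul]
    ring
  have hreprU : ∀ m : ℤ, fourierBasis.repr (hu.toLp _) m
      = starRingEnd ℂ (fourierCoeff f (n - m)) := by
    intro m
    rw [fourierBasis_repr, fourierCoeff_congr_ae' hu.coeFn_toLp m]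
    unfold fourierCoeff
    rw [← integral_conj]
    refine integral_congr_ae (Filter.Eventually.of_forall fun θ => ?_)
    simp only [smul_eq_mul, map_mul, Complex.conj_conj, ← fourier_neg]
    simp only [sub_eq_add_neg, neg_neg, neg_add_rev, fourier_add, mul_comm, mul_assoc, mul_left_comm]
  have hreprV : ∀ m : ℤ, fourierBasis.repr (hg.toLp g) m = fourierCoeff g m := by
    intro m
    rw [fourierBasis_repr]
    exact fourierCoeff_congr_ae' hg.coeFn_toLp m
  have hs := lp.hasSum_inner (𝕜 := ℂ) (fourierBasis.repr (hu.toLp _)) (fourierBasis.repr (hg.toLp g))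
  rw [fourierBasis.repr.inner_map_map, hinner] at hs
  exact hs.congr_fun fun m => by
    rw [RCLike.inner_apply, hreprU, hreprV, Complex.conj_conj, mul_comm]

lemma hasSum_realize {f : ℤ → ℂ} {c : ℂ} (h : HasSum f c) (h1 : ∀ m, (f m).im = 0) :
    c.im = 0 ∧ HasSum (fun m => (f m).re) c.re := by
  rw [Complex.hasSum_iff] at h
  refine ⟨?_, h.1⟩
  have h2 := h.2
  simp only [h1] at h2
  exact (h2.unique hasSum_zero)

lemma coeff_pow_nonneg {j : ℕ} (hj1 : 1 ≤ j) {G : Circle2Pi → ℂ}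
    (hG : MemLp G (2 * j : ℝ≥0∞) circleMeasure)
    (hGpos : ∀ n : ℤ, (fourierCoeff G n).im = 0 ∧ 0 ≤ (fourierCoeff G n).re) :
    ∀ k : ℕ, 1 ≤ k → k ≤ j → ∀ n : ℤ,
      (fourierCoeff (fun θ => G θ ^ k) n).im = 0 ∧ 0 ≤ (fourierCoeff (fun θ => G θ ^ k) n).re := by
  intro k
  induction k with
  | zero => omega
  | succ k ih =>
    intro _ hkj n
    rcases Nat.eq_zero_or_pos k with h0 | hpos
    · subst h0
      simpa using hGpos n
    · have hGk2 := memLp_pow_two hj1 hG hpos (le_trans (Nat.le_succ k) hkj)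
      have hG2 : MemLp G 2 circleMeasure :=
        (memLp_pow_two hj1 hG (le_refl 1) hj1).ae_eq
          (Filter.Eventually.of_forall fun θ => pow_one (G θ))
      have hs := fourierCoeff_mul_hasSum hGk2 hG2 n
      have heq : fourierCoeff (fun θ => G θ ^ k * G θ) n
          = fourierCoeff (fun θ => G θ ^ (k + 1)) n :=
        fourierCoeff_congr_ae' (Filter.Eventually.of_forall fun θ => (pow_succ (G θ) k).symm) n
      rw [heq] at hs
      have him : ∀ m : ℤ,
          ((fourierCoeff (fun θ => G θ ^ k) (n - m)) * fourierCoeff G m).im = 0 := by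
        intro m
        rw [Complex.mul_im, (ih hpos (by omega) (n - m)).1, (hGpos m).1]
        ring
      obtain ⟨him0, hre⟩ := hasSum_realize hs him
      refine ⟨him0, hre.nonneg fun m => ?_⟩
      rw [Complex.mul_re, (ih hpos (by omega) (n - m)).1, (hGpos m).1]
      have := (ih hpos (by omega) (n - m)).2
      have := (hGpos m).2
      nlinarith

set_option maxHeartbeats 2000000 in
/-- if `G ∈ L^{2j}` is nonzero with nonnegative real Fourier coefficients
and `F = (conj G)^{j-1} G^j`, then `F̂` is real and nonnegative, the 0-th coefficient `a`
of `|G|^{2j-2} = (conj G · G)^{j-1}` is real and strictly positive, `F̂(n) ≥ a Ĝ(n)` for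
all `n`, and the support of `Ĝ` is contained in the support of `F̂`. -/
theorem support_of_G_in_support_of_F (j : ℕ) (hj : 1 < j)
    (G : Circle2Pi → ℂ) (hG : MemLp G (2 * j : ℝ≥0∞) circleMeasure)
    (hG0 : ¬ G =ᵐ[circleMeasure] 0)
    (hGpos : ∀ n : ℤ, (fourierCoeff G n).im = 0 ∧ 0 ≤ (fourierCoeff G n).re)
    (F : Circle2Pi → ℂ)
    (hF : F = fun θ => (starRingEnd ℂ (G θ)) ^ (j - 1) * (G θ) ^ j)
    (a : ℂ)
    (ha : a = fourierCoeff (fun θ => ((starRingEnd ℂ (G θ)) * G θ) ^ (j - 1)) 0) :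
    (∀ n : ℤ, (fourierCoeff F n).im = 0 ∧ 0 ≤ (fourierCoeff F n).re) ∧
    (a.im = 0 ∧ 0 < a.re) ∧
    (∀ n : ℤ, a.re * (fourierCoeff G n).re ≤ (fourierCoeff F n).re) ∧
    (∀ n : ℤ, fourierCoeff G n ≠ 0 → fourierCoeff F n ≠ 0) := by
  have hj1 : 1 ≤ j := hj.le
  set w : Circle2Pi → ℂ := fun θ => G θ ^ (j - 1) with hw_def
  have hw2 : MemLp w 2 circleMeasure := memLp_pow_two hj1 hG (by omega) (by omega)
  have hwc : ∀ n : ℤ, (fourierCoeff w n).im = 0 ∧ 0 ≤ (fourierCoeff w n).re := fun n =>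
    coeff_pow_nonneg hj1 hG hGpos (j - 1) (by omega) (by omega) n
  have hG2 : MemLp G 2 circleMeasure :=
    (memLp_pow_two hj1 hG (le_refl 1) hj1).ae_eq
      (Filter.Eventually.of_forall fun θ => pow_one (G θ))
  have hGj2 : MemLp (fun θ => G θ ^ j) 2 circleMeasure :=
    memLp_pow_two hj1 hG hj1 (le_refl j)
  have hGjc := coeff_pow_nonneg hj1 hG hGpos j hj1 (le_refl j)
  -- conj w coefficients
  have hwreal : ∀ m : ℤ, starRingEnd ℂ (fourierCoeff w m) = fourierCoeff w m := fun m =>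
    Complex.conj_eq_iff_im.mpr (hwc m).1
  have hconj : ∀ m : ℤ, fourierCoeff (fun θ => starRingEnd ℂ (w θ)) m = fourierCoeff w (-m) := by
    intro m
    rw [fourierCoeff_conj', hwreal]
  -- the `a` series
  have ha' : a = fourierCoeff (fun θ => starRingEnd ℂ (w θ) * w θ) 0 := by
    rw [ha]
    refine fourierCoeff_congr_ae' (Filter.Eventually.of_forall fun θ => ?_) 0
    simp [hw_def, mul_pow, map_pow]
  have hsa := fourierCoeff_mul_hasSum (memLp_star hw2) hw2 0
  rw [← ha'] at hsa
  have hsa' : HasSum (fun m : ℤ => fourierCoeff w m * fourierCoeff w m) a := by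
    refine hsa.congr_fun fun m => ?_
    rw [hconj, zero_sub, neg_neg]
  obtain ⟨haim, hare⟩ := hasSum_realize hsa' (fun m => by
    rw [Complex.mul_im, (hwc m).1]; ring)
  have hare' : HasSum (fun m : ℤ => (fourierCoeff w m).re * (fourierCoeff w m).re) a.re := by
    refine hare.congr_fun fun m => ?_
    rw [Complex.mul_re, (hwc m).1]
    ring
  -- existence of a nonzero coefficient of w
  have hex : ∃ m₀ : ℤ, fourierCoeff w m₀ ≠ 0 := by
    by_contra hall
    push_neg at hall
    have hrepr0 : fourierBasis.repr (hw2.toLp w) = 0 := by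
      apply lp.ext
      funext m
      rw [lp.coeFn_zero]
      simp only [Pi.zero_apply]
      rw [fourierBasis_repr, fourierCoeff_congr_ae' hw2.coeFn_toLp m]
      exact hall m
    have hw0 : hw2.toLp w = 0 := by
      apply fourierBasis.repr.injective
      rw [hrepr0, map_zero]
    have hweq : w =ᵐ[circleMeasure] 0 := by
      have h2 : hw2.toLp w = (MemLp.zero : MemLp (0 : Circle2Pi → ℂ) 2 circleMeasure).toLp 0 := by
        rw [hw0, MemLp.toLp_zero]
      exact (MemLp.toLp_eq_toLp_iff hw2 MemLp.zero).mp h2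
    refine hG0 (hweq.mono fun θ hθ => ?_)
    simp only [hw_def, Pi.zero_apply] at hθ ⊢
    exact pow_eq_zero_iff (by omega : j - 1 ≠ 0) |>.mp hθ
  obtain ⟨m₀, hm₀⟩ := hex
  have hm₀re : (fourierCoeff w m₀).re ≠ 0 := by
    intro h
    exact hm₀ (Complex.ext h (hwc m₀).1)
  have hapos : 0 < a.re := by
    have hle : (fourierCoeff w m₀).re * (fourierCoeff w m₀).re ≤ a.re :=
      le_hasSum hare' m₀ fun i _ => mul_self_nonneg _
    exact lt_of_lt_of_le (mul_self_pos.mpr hm₀re) hle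
  -- F coefficients
  have hFs : ∀ n : ℤ, HasSum
      (fun m : ℤ => fourierCoeff w (m - n) * fourierCoeff (fun θ => G θ ^ j) m)
      (fourierCoeff F n) := by
    intro n
    have hs := fourierCoeff_mul_hasSum (memLp_star hw2) hGj2 n
    have heq : fourierCoeff (fun θ => starRingEnd ℂ (w θ) * G θ ^ j) n = fourierCoeff F n := by
      refine fourierCoeff_congr_ae' (Filter.Eventually.of_forall fun θ => ?_) n
      rw [hF]
      simp [hw_def, map_pow]
    rw [heq] at hs
    refine hs.congr_fun fun m => ?_
    rw [hconj, neg_sub]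
  have hFre : ∀ n : ℤ, (fourierCoeff F n).im = 0 ∧ HasSum
      (fun m : ℤ => (fourierCoeff w (m - n)).re * (fourierCoeff (fun θ => G θ ^ j) m).re)
      (fourierCoeff F n).re := by
    intro n
    obtain ⟨h1, h2⟩ := hasSum_realize (hFs n) (fun m => by
      rw [Complex.mul_im, (hwc (m - n)).1, (hGjc m).1]; ring)
    refine ⟨h1, h2.congr_fun fun m => ?_⟩
    rw [Complex.mul_re, (hwc (m - n)).1]
    ring
  -- bound for d m := coeff of G^j
  have hdbound : ∀ n m : ℤ, (fourierCoeff w (m - n)).re * (fourierCoeff G n).re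
      ≤ (fourierCoeff (fun θ => G θ ^ j) m).re := by
    intro n m
    have hs := fourierCoeff_mul_hasSum hw2 hG2 m
    have heq : fourierCoeff (fun θ => w θ * G θ) m = fourierCoeff (fun θ => G θ ^ j) m := by
      refine fourierCoeff_congr_ae' (Filter.Eventually.of_forall fun θ => ?_) m
      simp only [hw_def]
      rw [← pow_succ, Nat.sub_add_cancel hj1]
    rw [heq] at hs
    obtain ⟨_, h2⟩ := hasSum_realize hs (fun l => by
      rw [Complex.mul_im, (hwc (m - l)).1, (hGpos l).1]; ring)
    have h2' : HasSum (fun l : ℤ => (fourierCoeff w (m - l)).re * (fourierCoeff G l).re)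
        (fourierCoeff (fun θ => G θ ^ j) m).re := by
      refine h2.congr_fun fun l => ?_
      rw [Complex.mul_re, (hwc (m - l)).1]
      ring
    exact le_hasSum h2' n fun i _ =>
      mul_nonneg (hwc (m - i)).2 (hGpos i).2
  -- conclusion 3
  have hbound : ∀ n : ℤ, a.re * (fourierCoeff G n).re ≤ (fourierCoeff F n).re := by
    intro n
    have hlow : HasSum
        (fun m : ℤ => (fourierCoeff w (m - n)).re * (fourierCoeff w (m - n)).re
          * (fourierCoeff G n).re)
        (a.re * (fourierCoeff G n).re) := by
      have h1 := hare'.mul_right (fourierCoeff G n).re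
      exact (Equiv.subRight n).hasSum_iff.mpr h1
    have := hasSum_le (fun m => ?_) hlow (hFre n).2
    · linarith [this]
    · rw [mul_assoc]
      exact mul_le_mul_of_nonneg_left
        (le_trans (le_of_eq rfl) (by
          have := hdbound n m
          nlinarith [(hwc (m - n)).2, (hGpos n).2, hdbound n m]))
        (hwc (m - n)).2
  refine ⟨fun n => ⟨(hFre n).1, ?_⟩, ⟨haim, hapos⟩, hbound, ?_⟩
  · exact (hFre n).2.nonneg fun m => mul_nonneg (hwc (m - n)).2 (hGjc m).2
  · intro n hn
    have hnre : 0 < (fourierCoeff G n).re := by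
      rcases lt_or_eq_of_le (hGpos n).2 with h | h
      · exact h
      · exact absurd (Complex.ext h.symm (hGpos n).1) hn
    intro hFn0
    have : (fourierCoeff F n).re = 0 := by rw [hFn0]; rfl
    nlinarith [hbound n, mul_pos hapos hnre]
end
end
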